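/- arXiv:0907.4216 — 2 statements merged into one kernel-verified Lean document; each statement's English description precedes it below -/
import Mathlib

section
/- Theorem (half-space operators on the border of the Banach triangle): Let w1, w2 ∈ ℝ² be linearly independent. Then sup over rectangles R ⊆ ℝ² of finite positive measure of the ratio ‖S_{(w1,w2)}(χ_R, χ_R)‖_{L¹(ℝ²)} / |R| is infinite (the principal value defining S_{(w1,w2)}(χ_R,χ_R)(x) existing for almost every x). Consequently, for every p ∈ [1,∞] with conjugate exponent p', there is no constant C such that ‖S_{(w1,w2)}(f,g)‖_{L¹(ℝ²)} ≤ C ‖f‖_{L^p(ℝ²)} ‖g‖_{L^{p'}(ℝ²)} for all indicator functions f, g of rectangles; i.e., S_{(w1,w2)} is unbounded from L^p(ℝ²)×L^{p'}(ℝ²) to L¹(ℝ²). -/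
open MeasureTheory Filter Topology Set ENNReal

noncomputable section

abbrev V2 : Type := ℝ × ℝ

def dot2 (x y : V2) : ℝ := x.1 * y.1 + x.2 * y.2

/-- Rotation of a vector of ℝ² by +90 degrees. -/
def perp (u : V2) : V2 := (-u.2, u.1)

/-- The closed rectangle with corner `c`, unit side direction `u` (and `perp u`),
and side lengths `l1` (in direction `u`) and `l2`. -/
def rectSet (c u : V2) (l1 l2 : ℝ) : Set V2 :=
  {x | ∃ s t : ℝ, s ∈ Set.Icc 0 l1 ∧ t ∈ Set.Icc 0 l2 ∧ x = c + s • u + t • perp u}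

/-- The `δ`-truncation of the directional bilinear Hilbert transform
`S_{(w₁,w₂)}(f,g)(x) = p.v.∫ f(x−tw₁) g(x−tw₂) dt/t`. -/
def truncS (w1 w2 : V2) (f g : V2 → ℝ) (x : V2) (δ : ℝ) : ℝ :=
  ∫ t in {t : ℝ | δ < |t| ∧ |t| < δ⁻¹}, f (x - t • w1) * g (x - t • w2) / t

/-- `L` is the principal value `S_{(w₁,w₂)}(f,g)(x)`. -/
def SPV (w1 w2 : V2) (f g : V2 → ℝ) (x : V2) (L : ℝ) : Prop :=
  Filter.Tendsto (truncS w1 w2 f g x) (𝓝[>] (0 : ℝ)) (𝓝 L)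

namespace BHT

lemma continuous_dot2 (v : V2) : Continuous (fun x : V2 => dot2 x v) := by
  unfold dot2; fun_prop

lemma mem_rect_iff {c u : V2} {l1 l2 : ℝ} (hu : dot2 u u = 1) (x : V2) :
    x ∈ rectSet c u l1 l2 ↔
      dot2 (x - c) u ∈ Icc 0 l1 ∧ dot2 (x - c) (perp u) ∈ Icc 0 l2 := by
  have hu' : u.1 * u.1 + u.2 * u.2 = 1 := hu
  constructor
  · rintro ⟨s, t, hs, ht, rfl⟩
    have e1 : dot2 (c + s • u + t • perp u - c) u = s := by
      simp only [dot2, perp, Prod.fst_add, Prod.snd_add, Prod.fst_sub, Prod.snd_sub,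
        Prod.smul_fst, Prod.smul_snd, smul_eq_mul]
      linear_combination s * hu'
    have e2 : dot2 (c + s • u + t • perp u - c) (perp u) = t := by
      simp only [dot2, perp, Prod.fst_add, Prod.snd_add, Prod.fst_sub, Prod.snd_sub,
        Prod.smul_fst, Prod.smul_snd, smul_eq_mul]
      linear_combination t * hu'
    rw [e1, e2]; exact ⟨hs, ht⟩
  · rintro ⟨h1, h2⟩
    refine ⟨dot2 (x - c) u, dot2 (x - c) (perp u), h1, h2, ?_⟩
    have : x - c = (dot2 (x-c) u) • u + (dot2 (x-c) (perp u)) • perp u := by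
      rw [Prod.ext_iff]
      simp only [dot2, perp, Prod.fst_add, Prod.snd_add, Prod.fst_sub, Prod.snd_sub,
        Prod.smul_fst, Prod.smul_snd, smul_eq_mul]
      constructor
      · linear_combination (c.1 - x.1) * hu'
      · linear_combination (c.2 - x.2) * hu'
    rw [add_assoc, ← this]; abel

lemma isClosed_rect {c u : V2} {l1 l2 : ℝ} (hu : dot2 u u = 1) :
    IsClosed (rectSet c u l1 l2) := by
  have : rectSet c u l1 l2 =
      ((fun x : V2 => dot2 (x - c) u) ⁻¹' Icc 0 l1) ∩
      ((fun x : V2 => dot2 (x - c) (perp u)) ⁻¹' Icc 0 l2) := by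
    ext x; rw [mem_rect_iff hu]; rfl
  rw [this]
  have h1 : Continuous (fun x : V2 => dot2 (x - c) u) :=
    (continuous_dot2 u).comp (continuous_id.sub continuous_const)
  have h2 : Continuous (fun x : V2 => dot2 (x - c) (perp u)) :=
    (continuous_dot2 (perp u)).comp (continuous_id.sub continuous_const)
  exact (IsClosed.preimage h1 isClosed_Icc).inter (IsClosed.preimage h2 isClosed_Icc)

end BHT

def Sset (w1 w2 : V2) (R : Set V2) (x : V2) : Set ℝ :=
  {t | x - t • w1 ∈ R ∧ x - t • w2 ∈ R}

namespace BHT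

lemma dot2_expand (y w v : V2) (t : ℝ) :
    dot2 (y - t • w) v = dot2 y v - t * dot2 w v := by
  simp only [dot2, Prod.fst_sub, Prod.snd_sub, Prod.smul_fst, Prod.smul_snd, smul_eq_mul]
  ring

lemma mem_S_iff {w1 w2 c u : V2} {l1 l2 : ℝ} (hu : dot2 u u = 1) (x : V2) (t : ℝ) :
    t ∈ Sset w1 w2 (rectSet c u l1 l2) x ↔
      ((dot2 (x - c) u - t * dot2 w1 u ∈ Icc 0 l1 ∧
        dot2 (x - c) (perp u) - t * dot2 w1 (perp u) ∈ Icc 0 l2) ∧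
       (dot2 (x - c) u - t * dot2 w2 u ∈ Icc 0 l1 ∧
        dot2 (x - c) (perp u) - t * dot2 w2 (perp u) ∈ Icc 0 l2)) := by
  have e : ∀ w : V2, x - t • w - c = (x - c) - t • w := fun w => by abel
  constructor
  · rintro ⟨h1, h2⟩
    rw [mem_rect_iff hu] at h1 h2
    rw [e, dot2_expand, dot2_expand] at h1 h2
    exact ⟨h1, h2⟩
  · rintro ⟨h1, h2⟩
    constructor <;> rw [mem_rect_iff hu, e, dot2_expand, dot2_expand]
    exacts [h1, h2]

lemma slab_cvx {v γ l t1 t2 t : ℝ} (h1 : v - t1 * γ ∈ Icc 0 l) (h2 : v - t2 * γ ∈ Icc 0 l)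
    (ht : t ∈ Icc t1 t2) : v - t * γ ∈ Icc 0 l := by
  rcases le_total 0 γ with hγ | hγ <;>
    exact ⟨by nlinarith [h1.1, h1.2, h2.1, h2.2, ht.1, ht.2],
           by nlinarith [h1.1, h1.2, h2.1, h2.2, ht.1, ht.2]⟩

lemma S_ordConnected {w1 w2 c u : V2} {l1 l2 : ℝ} (hu : dot2 u u = 1) (x : V2) :
    OrdConnected (Sset w1 w2 (rectSet c u l1 l2) x) := by
  constructor
  intro t1 h1 t2 h2 t ht
  rw [mem_S_iff hu] at h1 h2 ⊢
  exact ⟨⟨slab_cvx h1.1.1 h2.1.1 ht, slab_cvx h1.1.2 h2.1.2 ht⟩,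
         ⟨slab_cvx h1.2.1 h2.2.1 ht, slab_cvx h1.2.2 h2.2.2 ht⟩⟩

lemma S_isClosed {w1 w2 c u : V2} {l1 l2 : ℝ} (hu : dot2 u u = 1) (x : V2) :
    IsClosed (Sset w1 w2 (rectSet c u l1 l2) x) := by
  have hR := isClosed_rect (c := c) (l1 := l1) (l2 := l2) hu
  have h1 : Continuous (fun t : ℝ => x - t • w1) := by fun_prop
  have h2 : Continuous (fun t : ℝ => x - t • w2) := by fun_prop
  exact (hR.preimage h1).inter (hR.preimage h2)

lemma dot2_eq_zero {w u : V2} (hu : dot2 u u = 1) (h1 : dot2 w u = 0)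
    (h2 : dot2 w (perp u) = 0) : w = 0 := by
  have hu' : u.1 * u.1 + u.2 * u.2 = 1 := hu
  have e1 : w.1 * u.1 + w.2 * u.2 = 0 := h1
  have e2 : w.1 * (-u.2) + w.2 * u.1 = 0 := h2
  rw [Prod.ext_iff]
  constructor
  · show w.1 = (0 : ℝ)
    linear_combination (-w.1) * hu' + u.1 * e1 - u.2 * e2
  · show w.2 = (0 : ℝ)
    linear_combination (-w.2) * hu' + u.2 * e1 + u.1 * e2

lemma slab_abs_le {v γ l t : ℝ} (hγ : γ ≠ 0) (h : v - t * γ ∈ Icc 0 l) :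
    |t| ≤ (|v| + |l|) / |γ| := by
  rw [le_div_iff₀ (abs_pos.mpr hγ), ← abs_mul]
  have h1 : |v - (v - t*γ)| ≤ |v| + |v - t*γ| := abs_sub _ _
  have h2 : |v - t * γ| ≤ |l| := by
    rw [abs_le]
    constructor
    · calc -|l| ≤ 0 := neg_nonpos.mpr (abs_nonneg l)
        _ ≤ v - t*γ := h.1
    · exact le_trans h.2 (le_abs_self l)
  calc |t * γ| = |v - (v - t*γ)| := by ring_nf
    _ ≤ |v| + |v - t*γ| := h1
    _ ≤ |v| + |l| := by linarith

lemma S_bdd {w1 w2 c u : V2} {l1 l2 : ℝ} (hu : dot2 u u = 1) (hw1 : w1 ≠ 0) (x : V2) :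
    ∃ K : ℝ, ∀ t ∈ Sset w1 w2 (rectSet c u l1 l2) x, |t| ≤ K := by
  rcases (by
    by_contra hcon
    push_neg at hcon
    exact hw1 (dot2_eq_zero hu hcon.1 hcon.2) : dot2 w1 u ≠ 0 ∨ dot2 w1 (perp u) ≠ 0) with ha | hb
  · exact ⟨(|dot2 (x - c) u| + |l1|) / |dot2 w1 u|,
      fun t ht => slab_abs_le ha (((mem_S_iff hu x t).mp ht).1.1)⟩
  · exact ⟨(|dot2 (x - c) (perp u)| + |l2|) / |dot2 w1 (perp u)|,
      fun t ht => slab_abs_le hb (((mem_S_iff hu x t).mp ht).1.2)⟩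

lemma S_bddBelow {w1 w2 c u : V2} {l1 l2 : ℝ} (hu : dot2 u u = 1) (hw1 : w1 ≠ 0) (x : V2) :
    BddBelow (Sset w1 w2 (rectSet c u l1 l2) x) := by
  obtain ⟨K, hK⟩ := S_bdd hu hw1 (c := c) (l1 := l1) (l2 := l2) (w2 := w2) x
  exact ⟨-K, fun t ht => neg_le_of_abs_le (hK t ht)⟩

lemma S_bddAbove {w1 w2 c u : V2} {l1 l2 : ℝ} (hu : dot2 u u = 1) (hw1 : w1 ≠ 0) (x : V2) :
    BddAbove (Sset w1 w2 (rectSet c u l1 l2) x) := by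
  obtain ⟨K, hK⟩ := S_bdd hu hw1 (c := c) (l1 := l1) (l2 := l2) (w2 := w2) x
  exact ⟨K, fun t ht => le_of_abs_le (hK t ht)⟩

lemma S_eq_Icc {w1 w2 c u : V2} {l1 l2 : ℝ} (hu : dot2 u u = 1) (hw1 : w1 ≠ 0) (x : V2)
    (hne : (Sset w1 w2 (rectSet c u l1 l2) x).Nonempty) :
    Sset w1 w2 (rectSet c u l1 l2) x =
      Icc (sInf (Sset w1 w2 (rectSet c u l1 l2) x)) (sSup (Sset w1 w2 (rectSet c u l1 l2) x)) := by
  set S := Sset w1 w2 (rectSet c u l1 l2) x with hSdef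
  have hbb := S_bddBelow hu hw1 (c := c) (l1 := l1) (l2 := l2) (w2 := w2) x
  have hba := S_bddAbove hu hw1 (c := c) (l1 := l1) (l2 := l2) (w2 := w2) x
  apply Set.Subset.antisymm
  · exact fun t ht => ⟨csInf_le hbb ht, le_csSup hba ht⟩
  · exact (S_ordConnected hu x).out ((S_isClosed hu x).csInf_mem hne hbb)
      ((S_isClosed hu x).csSup_mem hne hba)

end BHT

namespace BHT

lemma inv_trick {a δ : ℝ} (ha : 0 < a) (hδ : 0 < δ) (h : δ < a⁻¹) : a < δ⁻¹ := by
  rw [← one_div, lt_div_iff₀ hδ]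
  nlinarith [mul_lt_mul_of_pos_left h ha, mul_inv_cancel₀ (ne_of_gt ha)]

lemma truncS_eq {w1 w2 c u : V2} {l1 l2 : ℝ} (hu : dot2 u u = 1) (x : V2) (δ : ℝ) :
    truncS w1 w2 (Set.indicator (rectSet c u l1 l2) fun _ => (1 : ℝ))
        (Set.indicator (rectSet c u l1 l2) fun _ => (1 : ℝ)) x δ =
      ∫ t in ({t : ℝ | δ < |t| ∧ |t| < δ⁻¹} ∩ Sset w1 w2 (rectSet c u l1 l2) x),
        t⁻¹ := by
  set R := rectSet c u l1 l2 with hR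
  have hmeas : MeasurableSet (Sset w1 w2 R x) := (S_isClosed hu x).measurableSet
  have hfun : (fun t : ℝ => Set.indicator R (fun _ => (1:ℝ)) (x - t • w1) *
      Set.indicator R (fun _ => (1:ℝ)) (x - t • w2) / t) =
      fun t : ℝ => (Sset w1 w2 R x).indicator (fun s => s⁻¹) t := by
    funext t
    by_cases h1 : x - t • w1 ∈ R
    · by_cases h2 : x - t • w2 ∈ R
      · have hmem : t ∈ Sset w1 w2 R x := ⟨h1, h2⟩
        rw [Set.indicator_of_mem h1, Set.indicator_of_mem h2, Set.indicator_of_mem hmem]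
        simp [one_div]
      · have hmem : t ∉ Sset w1 w2 R x := fun h => h2 h.2
        rw [Set.indicator_of_notMem h2, Set.indicator_of_notMem hmem]
        simp
    · have hmem : t ∉ Sset w1 w2 R x := fun h => h1 h.1
      rw [Set.indicator_of_notMem h1, Set.indicator_of_notMem hmem]
      simp
  unfold truncS
  rw [hfun, setIntegral_indicator hmeas]

lemma integral_Icc_inv {a b : ℝ} (hab : a ≤ b) (h0 : 0 < a ∨ b < 0) :
    ∫ t in Icc a b, t⁻¹ = Real.log (b / a) := by
  rw [MeasureTheory.integral_Icc_eq_integral_Ioc, ← intervalIntegral.integral_of_le hab]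
  apply integral_inv
  rw [Set.uIcc_of_le hab]
  rintro ⟨h1, h2⟩
  rcases h0 with h | h <;> linarith

theorem spv_empty {w1 w2 c u : V2} {l1 l2 : ℝ} (hu : dot2 u u = 1) (x : V2)
    (hS : Sset w1 w2 (rectSet c u l1 l2) x = ∅) :
    SPV w1 w2 (Set.indicator (rectSet c u l1 l2) fun _ => (1 : ℝ))
      (Set.indicator (rectSet c u l1 l2) fun _ => (1 : ℝ)) x 0 := by
  unfold SPV
  refine Filter.Tendsto.congr' ?_ (tendsto_const_nhds (x := (0:ℝ)))
  filter_upwards with δ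
  rw [truncS_eq hu, hS, Set.inter_empty]
  simp

theorem spv_pointwise {w1 w2 c u : V2} {l1 l2 : ℝ} (hu : dot2 u u = 1) (hw1 : w1 ≠ 0)
    (x : V2) (hS : (Sset w1 w2 (rectSet c u l1 l2) x).Nonempty)
    (hA : sInf (Sset w1 w2 (rectSet c u l1 l2) x) ≠ 0)
    (hB : sSup (Sset w1 w2 (rectSet c u l1 l2) x) ≠ 0) :
    SPV w1 w2 (Set.indicator (rectSet c u l1 l2) fun _ => (1 : ℝ))
      (Set.indicator (rectSet c u l1 l2) fun _ => (1 : ℝ)) x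
      (Real.log (|sSup (Sset w1 w2 (rectSet c u l1 l2) x)| /
        |sInf (Sset w1 w2 (rectSet c u l1 l2) x)|)) := by
  set S := Sset w1 w2 (rectSet c u l1 l2) x with hSdef
  set A := sInf S with hAdef
  set B := sSup S with hBdef
  have hbb : BddBelow S := S_bddBelow hu hw1 x
  have hba : BddAbove S := S_bddAbove hu hw1 x
  have hAB : A ≤ B := csInf_le_csSup hS hbb hba
  have hIcc : S = Icc A B := S_eq_Icc hu hw1 x hS
  unfold SPV
  rcases hA.lt_or_gt with hAneg | hApos
  · rcases hB.lt_or_gt with hBneg | hBpos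
    · -- A ≤ B < 0
      set ε := min (-B) (-A)⁻¹ with hε
      have hεpos : 0 < ε := lt_min (by linarith) (inv_pos.mpr (by linarith))
      refine Filter.Tendsto.congr' ?_ (tendsto_const_nhds (x := Real.log (|B| / |A|)))
      · filter_upwards [Ioo_mem_nhdsGT hεpos] with δ hδ
        have hδ0 : (0:ℝ) < δ := hδ.1
        have hδε : δ < ε := hδ.2
        have Keq : {t : ℝ | δ < |t| ∧ |t| < δ⁻¹} ∩ S = Icc A B := by
          rw [hIcc]
          ext t
          simp only [mem_inter_iff, mem_setOf_eq, mem_Icc]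
          constructor
          · rintro ⟨_, h⟩; exact h
          · rintro ⟨h1, h2⟩
            have ht0 : t < 0 := lt_of_le_of_lt h2 hBneg
            have habs : |t| = -t := abs_of_neg ht0
            refine ⟨⟨?_, ?_⟩, h1, h2⟩
            · rw [habs]; have : δ < -B := lt_of_lt_of_le hδε (min_le_left _ _); linarith
            · rw [habs]
              have h3 : δ < (-A)⁻¹ := lt_of_lt_of_le hδε (min_le_right _ _)
              have h4 : -A < δ⁻¹ := inv_trick (by linarith) hδ0 h3
              linarith
        rw [truncS_eq hu, Keq, integral_Icc_inv hAB (Or.inr hBneg)]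
        rw [abs_of_neg hBneg, abs_of_neg hAneg, neg_div_neg_eq]
    · -- A < 0 < B
      set ε := min (min (-A) B) (min (-A)⁻¹ B⁻¹) with hε
      have hεpos : 0 < ε := by
        exact lt_min (lt_min (by linarith) hBpos) (lt_min (inv_pos.mpr (by linarith)) (inv_pos.mpr hBpos))
      refine Filter.Tendsto.congr' ?_ (tendsto_const_nhds (x := Real.log (|B| / |A|)))
      · filter_upwards [Ioo_mem_nhdsGT hεpos] with δ hδ
        have hδ0 : (0:ℝ) < δ := hδ.1
        have hδε : δ < ε := hδ.2
        have hδA : δ < -A := lt_of_lt_of_le hδε (le_trans (min_le_left _ _) (min_le_left _ _))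
        have hδB : δ < B := lt_of_lt_of_le hδε (le_trans (min_le_left _ _) (min_le_right _ _))
        have hδA' : -A < δ⁻¹ := inv_trick (by linarith) hδ0
          (lt_of_lt_of_le hδε (le_trans (min_le_right _ _) (min_le_left _ _)))
        have hδB' : B < δ⁻¹ := inv_trick hBpos hδ0
          (lt_of_lt_of_le hδε (le_trans (min_le_right _ _) (min_le_right _ _)))
        have Keq : {t : ℝ | δ < |t| ∧ |t| < δ⁻¹} ∩ S = Ico A (-δ) ∪ Ioc δ B := by
          rw [hIcc]
          ext t
          simp only [mem_inter_iff, mem_setOf_eq, mem_Icc, mem_union, mem_Ico, mem_Ioc]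
          constructor
          · rintro ⟨⟨hgt, _⟩, h1, h2⟩
            rcases le_or_gt t 0 with h | h
            · left
              refine ⟨h1, ?_⟩
              rw [abs_of_nonpos h] at hgt; linarith
            · right
              rw [abs_of_pos h] at hgt; exact ⟨hgt, h2⟩
          · rintro (⟨h1, h2⟩ | ⟨h1, h2⟩)
            · have ht0 : t < 0 := by linarith
              have habs : |t| = -t := abs_of_neg ht0
              exact ⟨⟨by rw [habs]; linarith, by rw [habs]; linarith⟩, h1, by linarith⟩
            · have ht0 : 0 < t := by linarith
              have habs : |t| = t := abs_of_pos ht0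
              exact ⟨⟨by rw [habs]; linarith, by rw [habs]; linarith⟩, by linarith, h2⟩
        rw [truncS_eq hu, Keq]
        have hdisj : Disjoint (Ico A (-δ)) (Ioc δ B) := by
          rw [Set.disjoint_left]
          rintro t ⟨_, h2⟩ ⟨h3, _⟩; linarith
        have hcont1 : ContinuousOn (fun t : ℝ => t⁻¹) (Icc A (-δ)) := by
          apply ContinuousOn.inv₀ continuousOn_id
          intro t ht
          exact ne_of_lt (lt_of_le_of_lt ht.2 (by linarith))
        have hcont2 : ContinuousOn (fun t : ℝ => t⁻¹) (Icc δ B) := by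
          apply ContinuousOn.inv₀ continuousOn_id
          intro t ht
          exact ne_of_gt (lt_of_lt_of_le hδ0 ht.1)
        have hint1 : IntegrableOn (fun t : ℝ => t⁻¹) (Ico A (-δ)) volume :=
          (hcont1.integrableOn_Icc).mono_set Ico_subset_Icc_self
        have hint2 : IntegrableOn (fun t : ℝ => t⁻¹) (Ioc δ B) volume :=
          (hcont2.integrableOn_Icc).mono_set Ioc_subset_Icc_self
        rw [setIntegral_union hdisj measurableSet_Ioc hint1 hint2]
        have hAδ : A ≤ -δ := by linarith
        have hδB'' : δ ≤ B := le_of_lt hδB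
        have I1 : ∫ t in Ico A (-δ), t⁻¹ = Real.log ((-δ) / A) := by
          rw [MeasureTheory.integral_Ico_eq_integral_Ioo,
            ← MeasureTheory.integral_Ioc_eq_integral_Ioo,
            ← intervalIntegral.integral_of_le hAδ]
          apply integral_inv
          rw [Set.uIcc_of_le hAδ]
          rintro ⟨_, h2⟩; linarith
        have I2 : ∫ t in Ioc δ B, t⁻¹ = Real.log (B / δ) := by
          rw [← intervalIntegral.integral_of_le hδB'']
          apply integral_inv
          rw [Set.uIcc_of_le hδB'']
          rintro ⟨h1, _⟩; linarith
        rw [I1, I2, ← Real.log_mul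
          (ne_of_gt (div_pos_of_neg_of_neg (by linarith) hAneg))
          (ne_of_gt (div_pos hBpos hδ0))]
        congr 1
        rw [abs_of_pos hBpos, abs_of_neg hAneg, div_mul_div_comm,
          div_eq_div_iff (by linarith) (ne_of_lt (mul_neg_of_neg_of_pos hAneg hδ0))]
        ring
  · -- 0 < A
    have hBpos : 0 < B := lt_of_lt_of_le hApos hAB
    set ε := min A B⁻¹ with hε
    have hεpos : 0 < ε := lt_min hApos (by positivity)
    refine Filter.Tendsto.congr' ?_ (tendsto_const_nhds (x := Real.log (|B| / |A|)))
    · filter_upwards [Ioo_mem_nhdsGT hεpos] with δ hδ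
      have hδ0 : (0:ℝ) < δ := hδ.1
      have hδε : δ < ε := hδ.2
      have Keq : {t : ℝ | δ < |t| ∧ |t| < δ⁻¹} ∩ S = Icc A B := by
        rw [hIcc]
        ext t
        simp only [mem_inter_iff, mem_setOf_eq, mem_Icc]
        constructor
        · rintro ⟨_, h⟩; exact h
        · rintro ⟨h1, h2⟩
          have ht0 : 0 < t := lt_of_lt_of_le hApos h1
          have habs : |t| = t := abs_of_pos ht0
          refine ⟨⟨?_, ?_⟩, h1, h2⟩
          · rw [habs]; have : δ < A := lt_of_lt_of_le hδε (min_le_left _ _); linarith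
          · rw [habs]
            have h3 : δ < B⁻¹ := lt_of_lt_of_le hδε (min_le_right _ _)
            have h4 : B < δ⁻¹ := inv_trick hBpos hδ0 h3
            linarith
      rw [truncS_eq hu, Keq, integral_Icc_inv hAB (Or.inl hApos)]
      rw [abs_of_pos hBpos, abs_of_pos hApos]

end BHT

namespace BHT

lemma volume_line_zero (a b d : ℝ) (h : ¬(a = 0 ∧ b = 0)) :
    volume {x : V2 | a * x.1 + b * x.2 = d} = 0 := by
  by_cases hb : b = 0
  · have ha : a ≠ 0 := fun h' => h ⟨h', hb⟩
    have hset : {x : V2 | a * x.1 + b * x.2 = d} = {(d/a : ℝ)} ×ˢ (univ : Set ℝ) := by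
      ext x
      simp only [hb, zero_mul, add_zero, mem_setOf_eq, mem_prod, mem_singleton_iff,
        mem_univ, and_true]
      rw [eq_div_iff ha]
      constructor <;> intro h' <;> linarith [h']
    rw [hset, Measure.volume_eq_prod ℝ ℝ, Measure.prod_prod, Real.volume_singleton, zero_mul]
  · have hmeas : MeasurableSet {x : V2 | a * x.1 + b * x.2 = d} := by
      have : IsClosed {x : V2 | a * x.1 + b * x.2 = d} :=
        isClosed_eq (by fun_prop) continuous_const
      exact this.measurableSet
    rw [Measure.volume_eq_prod ℝ ℝ, Measure.prod_apply hmeas]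
    have hsl : ∀ x : ℝ, (Prod.mk x ⁻¹' {p : V2 | a * p.1 + b * p.2 = d})
        = {((d - a * x)/b : ℝ)} := by
      intro x
      ext y
      simp only [mem_preimage, mem_setOf_eq, mem_singleton_iff]
      rw [eq_div_iff hb]
      constructor <;> intro h' <;> linarith [h']
    simp only [hsl, Real.volume_singleton]
    exact lintegral_zero

lemma u_ne_zero {u : V2} (hu : dot2 u u = 1) : ¬(u.1 = 0 ∧ u.2 = 0) := by
  rintro ⟨h1, h2⟩
  have : u.1 * u.1 + u.2 * u.2 = 1 := hu
  rw [h1, h2] at this; norm_num at this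

lemma volume_dotline {c : V2} (v : V2) (hv : ¬(v.1 = 0 ∧ v.2 = 0)) (k : ℝ) :
    volume {x : V2 | dot2 (x - c) v = k} = 0 := by
  have hset : {x : V2 | dot2 (x - c) v = k}
      = {x : V2 | v.1 * x.1 + v.2 * x.2 = k + dot2 c v} := by
    ext x
    simp only [dot2, Prod.fst_sub, Prod.snd_sub, mem_setOf_eq]
    constructor <;> intro h <;> linear_combination h
  rw [hset]
  exact volume_line_zero _ _ _ hv

lemma slab_center {v γ l t ε C : ℝ} (hγ : |γ| ≤ C) (ht : |t| ≤ ε) (hε : 0 ≤ ε)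
    (h1 : ε * C ≤ v) (h2 : ε * C ≤ l - v) : v - t * γ ∈ Icc 0 l := by
  have hm : |t| * |γ| ≤ ε * C := mul_le_mul ht hγ (abs_nonneg γ) hε
  have habs : |t * γ| = |t| * |γ| := abs_mul t γ
  constructor <;> nlinarith [le_abs_self (t * γ), neg_abs_le (t * γ)]

theorem ae_good {w1 w2 c u : V2} {l1 l2 : ℝ} (hu : dot2 u u = 1) (hw1 : w1 ≠ 0) :
    ∀ᵐ x : V2, (Sset w1 w2 (rectSet c u l1 l2) x = ∅) ∨
      ((Sset w1 w2 (rectSet c u l1 l2) x).Nonempty ∧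
        sInf (Sset w1 w2 (rectSet c u l1 l2) x) ≠ 0 ∧
        sSup (Sset w1 w2 (rectSet c u l1 l2) x) ≠ 0) := by
  set p : V2 → ℝ := fun x => dot2 (x - c) u with hp
  set q : V2 → ℝ := fun x => dot2 (x - c) (perp u) with hq
  have hperp : ¬((perp u).1 = 0 ∧ (perp u).2 = 0) := by
    rintro ⟨h1, h2⟩
    exact u_ne_zero hu ⟨by simpa [perp] using h2, by simpa [perp] using (neg_eq_zero.mp h1)⟩
  have hsub : {x : V2 | ¬ ((Sset w1 w2 (rectSet c u l1 l2) x = ∅) ∨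
      ((Sset w1 w2 (rectSet c u l1 l2) x).Nonempty ∧
        sInf (Sset w1 w2 (rectSet c u l1 l2) x) ≠ 0 ∧
        sSup (Sset w1 w2 (rectSet c u l1 l2) x) ≠ 0))} ⊆
      {x : V2 | p x = 0} ∪ {x : V2 | p x = l1} ∪ {x : V2 | q x = 0} ∪ {x : V2 | q x = l2} := by
    intro x hx
    simp only [mem_setOf_eq] at hx
    push_neg at hx
    obtain ⟨hne', hbad⟩ := hx
    have hne : (Sset w1 w2 (rectSet c u l1 l2) x).Nonempty := hne'
    have hAB0 : sInf (Sset w1 w2 (rectSet c u l1 l2) x) = 0 ∨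
        sSup (Sset w1 w2 (rectSet c u l1 l2) x) = 0 := by
      by_contra hcon
      push_neg at hcon
      exact hcon.2 (hbad hne hcon.1)
    set S := Sset w1 w2 (rectSet c u l1 l2) x with hS
    have hbb : BddBelow S := S_bddBelow hu hw1 x
    have hba : BddAbove S := S_bddAbove hu hw1 x
    have hcl : IsClosed S := S_isClosed hu x
    have h0S : (0 : ℝ) ∈ S := by
      rcases hAB0 with h | h
      · have := hcl.csInf_mem hne hbb
        rwa [h] at this
      · have := hcl.csSup_mem hne hba
        rwa [h] at this
    have hxR : x ∈ rectSet c u l1 l2 := by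
      have := h0S.1
      simpa using this
    rw [mem_rect_iff hu] at hxR
    by_contra hmem
    simp only [mem_union, mem_setOf_eq] at hmem
    push_neg at hmem
    obtain ⟨⟨⟨hp0, hpl⟩, hq0⟩, hql⟩ := hmem
    have hpx1 : 0 < p x := lt_of_le_of_ne hxR.1.1 (Ne.symm hp0)
    have hpx2 : p x < l1 := lt_of_le_of_ne hxR.1.2 hpl
    have hqx1 : 0 < q x := lt_of_le_of_ne hxR.2.1 (Ne.symm hq0)
    have hqx2 : q x < l2 := lt_of_le_of_ne hxR.2.2 hql
    set C : ℝ := |dot2 w1 u| + |dot2 w1 (perp u)| + |dot2 w2 u| + |dot2 w2 (perp u)| + 1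
      with hC
    have hCpos : 0 < C := by positivity
    set m : ℝ := min (min (p x) (l1 - p x)) (min (q x) (l2 - q x)) with hm
    have hmpos : 0 < m := by
      apply lt_min (lt_min hpx1 (by linarith)) (lt_min hqx1 (by linarith))
    set ε : ℝ := m / C with hεdef
    have hεpos : 0 < ε := div_pos hmpos hCpos
    have hεC : ε * C = m := div_mul_cancel₀ m (ne_of_gt hCpos)
    have hCa1 : |dot2 w1 u| ≤ C := by
      rw [hC]
      linarith [abs_nonneg (dot2 w1 (perp u)), abs_nonneg (dot2 w2 u),
        abs_nonneg (dot2 w2 (perp u))]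
    have hCb1 : |dot2 w1 (perp u)| ≤ C := by
      rw [hC]
      linarith [abs_nonneg (dot2 w1 u), abs_nonneg (dot2 w2 u),
        abs_nonneg (dot2 w2 (perp u))]
    have hCa2 : |dot2 w2 u| ≤ C := by
      rw [hC]
      linarith [abs_nonneg (dot2 w1 u), abs_nonneg (dot2 w1 (perp u)),
        abs_nonneg (dot2 w2 (perp u))]
    have hCb2 : |dot2 w2 (perp u)| ≤ C := by
      rw [hC]
      linarith [abs_nonneg (dot2 w1 u), abs_nonneg (dot2 w1 (perp u)),
        abs_nonneg (dot2 w2 u)]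
    have hmp1 : ε * C ≤ p x := by
      rw [hεC]; exact le_trans (min_le_left _ _) (min_le_left _ _)
    have hmp2 : ε * C ≤ l1 - p x := by
      rw [hεC]; exact le_trans (min_le_left _ _) (min_le_right _ _)
    have hmq1 : ε * C ≤ q x := by
      rw [hεC]; exact le_trans (min_le_right _ _) (min_le_left _ _)
    have hmq2 : ε * C ≤ l2 - q x := by
      rw [hεC]; exact le_trans (min_le_right _ _) (min_le_right _ _)
    have hsubS : Icc (-ε) ε ⊆ S := by
      intro t ht
      have htabs : |t| ≤ ε := abs_le.mpr ⟨by linarith [ht.1], ht.2⟩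
      rw [hS, mem_S_iff hu]
      exact ⟨⟨slab_center hCa1 htabs (le_of_lt hεpos) hmp1 hmp2,
              slab_center hCb1 htabs (le_of_lt hεpos) hmq1 hmq2⟩,
             ⟨slab_center hCa2 htabs (le_of_lt hεpos) hmp1 hmp2,
              slab_center hCb2 htabs (le_of_lt hεpos) hmq1 hmq2⟩⟩
    have hAle : sInf S ≤ -ε := csInf_le hbb (hsubS ⟨le_refl _, by linarith⟩)
    have hBge : ε ≤ sSup S := le_csSup hba (hsubS ⟨by linarith, le_refl _⟩)
    rcases hAB0 with h | h <;> [linarith; linarith]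
  rw [ae_iff]
  apply measure_mono_null hsub
  refine measure_union_null (measure_union_null (measure_union_null ?_ ?_) ?_) ?_
  · exact volume_dotline u (u_ne_zero hu) 0
  · exact volume_dotline u (u_ne_zero hu) l1
  · exact volume_dotline (perp u) hperp 0
  · exact volume_dotline (perp u) hperp l2

theorem part_one {w1 w2 c u : V2} {l1 l2 : ℝ} (hu : dot2 u u = 1) (hw1 : w1 ≠ 0) :
    ∃ g : V2 → ℝ, ∀ᵐ x : V2,
      SPV w1 w2 (Set.indicator (rectSet c u l1 l2) fun _ => (1 : ℝ))
        (Set.indicator (rectSet c u l1 l2) fun _ => (1 : ℝ)) x (g x) := by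
  classical
  refine ⟨fun x => if h : (Sset w1 w2 (rectSet c u l1 l2) x).Nonempty then
    Real.log (|sSup (Sset w1 w2 (rectSet c u l1 l2) x)| /
      |sInf (Sset w1 w2 (rectSet c u l1 l2) x)|) else 0, ?_⟩
  filter_upwards [ae_good (c := c) (l1 := l1) (l2 := l2) (w2 := w2) hu hw1] with x hx
  rcases hx with h | ⟨hne, hA, hB⟩
  · rw [dif_neg (by rw [h]; exact Set.not_nonempty_empty)]
    exact spv_empty hu x h
  · rw [dif_pos hne]
    exact spv_pointwise hu hw1 x hne hA hB

end BHT

namespace BHT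

def coordMap (u : V2) : V2 →ₗ[ℝ] V2 :=
  Matrix.toLin (Module.Basis.finTwoProd ℝ) (Module.Basis.finTwoProd ℝ) !![u.1, u.2; -u.2, u.1]

lemma coordMap_apply (u x : V2) : coordMap u x = (dot2 x u, dot2 x (perp u)) := by
  unfold coordMap
  rw [Matrix.toLin_finTwoProd_apply]
  simp only [dot2, perp, Prod.mk.injEq]
  constructor <;> ring

lemma coordMap_det {u : V2} (hu : dot2 u u = 1) : LinearMap.det (coordMap u) = 1 := by
  unfold coordMap
  rw [LinearMap.det_toLin, Matrix.det_fin_two_of]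
  have h : u.1 * u.1 + u.2 * u.2 = 1 := hu
  linear_combination h

lemma volume_coord_preimage {u : V2} (hu : dot2 u u = 1) (S : Set V2) :
    volume ((fun x : V2 => (dot2 x u, dot2 x (perp u))) ⁻¹' S) = volume S := by
  have hset : (fun x : V2 => (dot2 x u, dot2 x (perp u))) ⁻¹' S = (coordMap u) ⁻¹' S := by
    ext x
    rw [mem_preimage, mem_preimage, coordMap_apply]
  rw [hset, Measure.addHaar_preimage_linearMap volume
    (by rw [coordMap_det hu]; norm_num) S, coordMap_det hu]
  norm_num

lemma volume_coord_box {c u : V2} (hu : dot2 u u = 1) (A B : Set ℝ) :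
    volume {x : V2 | dot2 (x - c) u ∈ A ∧ dot2 (x - c) (perp u) ∈ B} =
      volume A * volume B := by
  have hset : {x : V2 | dot2 (x - c) u ∈ A ∧ dot2 (x - c) (perp u) ∈ B} =
      (fun x : V2 => x + (-c)) ⁻¹'
        ((fun x : V2 => (dot2 x u, dot2 x (perp u))) ⁻¹' (A ×ˢ B)) := by
    ext x
    simp only [mem_setOf_eq, mem_preimage, mem_prod, ← sub_eq_add_neg]
  rw [hset, measure_preimage_add_right, volume_coord_preimage hu,
    Measure.volume_eq_prod ℝ ℝ, Measure.prod_prod]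

lemma volume_rect {c u : V2} {l1 l2 : ℝ} (hu : dot2 u u = 1) :
    volume (rectSet c u l1 l2) = ENNReal.ofReal l1 * ENNReal.ofReal l2 := by
  have hset : rectSet c u l1 l2 =
      {x : V2 | dot2 (x - c) u ∈ Icc 0 l1 ∧ dot2 (x - c) (perp u) ∈ Icc 0 l2} := by
    ext x; exact mem_rect_iff hu x
  rw [hset, volume_coord_box hu, Real.volume_Icc, Real.volume_Icc, sub_zero, sub_zero]

end BHT

namespace BHT

lemma det_ne_zero {w1 w2 : V2} (hli : LinearIndependent ℝ ![w1, w2]) :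
    w1.1 * w2.2 - w1.2 * w2.1 ≠ 0 := by
  intro hD
  have H := LinearIndependent.pair_iff.mp hli
  have h1 := H w2.2 (-w1.2) (by
    rw [Prod.ext_iff]
    constructor
    · show w2.2 * w1.1 + (-w1.2) * w2.1 = 0
      linear_combination hD
    · show w2.2 * w1.2 + (-w1.2) * w2.2 = 0
      ring)
  have h2 := H w2.1 (-w1.1) (by
    rw [Prod.ext_iff]
    constructor
    · show w2.1 * w1.1 + (-w1.1) * w2.1 = 0
      ring
    · show w2.1 * w1.2 + (-w1.1) * w2.2 = 0
      linear_combination -hD)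
  have hw1 : w1 ≠ 0 := by
    have := hli.ne_zero 0
    simpa using this
  apply hw1
  rw [Prod.ext_iff]
  exact ⟨neg_eq_zero.mp h2.2, neg_eq_zero.mp h1.2⟩

lemma dot2_self_pos {v : V2} (hv : v ≠ 0) : 0 < dot2 v v := by
  have h : dot2 v v = v.1 * v.1 + v.2 * v.2 := rfl
  rcases lt_or_eq_of_le (by nlinarith [mul_self_nonneg v.1, mul_self_nonneg v.2] :
      (0:ℝ) ≤ dot2 v v) with hlt | heq
  · exact hlt
  · exfalso
    apply hv
    rw [Prod.ext_iff]
    constructor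
    · have : v.1 * v.1 = 0 := by nlinarith [mul_self_nonneg v.1, mul_self_nonneg v.2]
      exact mul_self_eq_zero.mp this
    · have : v.2 * v.2 = 0 := by nlinarith [mul_self_nonneg v.1, mul_self_nonneg v.2]
      exact mul_self_eq_zero.mp this

/-- Construction of the adapted unit direction for part (ii). -/
lemma adapted_direction {w1 w2 : V2} (hli : LinearIndependent ℝ ![w1, w2]) :
    ∃ u : V2, dot2 u u = 1 ∧ 0 < dot2 w1 (perp u) ∧ dot2 w2 (perp u) = dot2 w1 (perp u) := by
  have hD := det_ne_zero hli
  have hd : w1 - w2 ≠ 0 := by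
    intro h
    have hw12 : w1 = w2 := sub_eq_zero.mp h
    apply hD
    rw [hw12]; ring
  set d : V2 := w1 - w2 with hddef
  have hdd : 0 < dot2 d d := dot2_self_pos hd
  set m : ℝ := Real.sqrt (dot2 d d) with hmdef
  have hm : 0 < m := Real.sqrt_pos.mpr hdd
  have hm2 : m * m = dot2 d d := Real.mul_self_sqrt (le_of_lt hdd)
  set u0 : V2 := m⁻¹ • d with hu0def
  have hu0 : dot2 u0 u0 = 1 := by
    show (m⁻¹ • d).1 * (m⁻¹ • d).1 + (m⁻¹ • d).2 * (m⁻¹ • d).2 = 1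
    simp only [Prod.smul_fst, Prod.smul_snd, smul_eq_mul]
    have : dot2 d d = d.1 * d.1 + d.2 * d.2 := rfl
    field_simp
    linarith [hm2, this]
  have hd1 : d.1 = w1.1 - w2.1 := rfl
  have hd2 : d.2 = w1.2 - w2.2 := rfl
  have hβ1 : dot2 w1 (perp u0) = m⁻¹ * (w1.1 * w2.2 - w1.2 * w2.1) := by
    show w1.1 * (-(m⁻¹ • d).2) + w1.2 * (m⁻¹ • d).1 = _
    simp only [Prod.smul_fst, Prod.smul_snd, smul_eq_mul]
    rw [hd1, hd2]; ring
  have hβ2 : dot2 w2 (perp u0) = m⁻¹ * (w1.1 * w2.2 - w1.2 * w2.1) := by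
    show w2.1 * (-(m⁻¹ • d).2) + w2.2 * (m⁻¹ • d).1 = _
    simp only [Prod.smul_fst, Prod.smul_snd, smul_eq_mul]
    rw [hd1, hd2]; ring
  have hβ0 : dot2 w1 (perp u0) ≠ 0 := by
    rw [hβ1]
    exact mul_ne_zero (inv_ne_zero (ne_of_gt hm)) hD
  rcases hβ0.lt_or_gt with hneg | hpos
  · refine ⟨-u0, ?_, ?_, ?_⟩
    · show (-u0).1 * (-u0).1 + (-u0).2 * (-u0).2 = 1
      have : u0.1 * u0.1 + u0.2 * u0.2 = 1 := hu0
      simp only [Prod.fst_neg, Prod.snd_neg]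
      linarith [this]
    · have hperp : perp (-u0) = -perp u0 := by
        simp [perp, Prod.ext_iff]
      rw [hperp]
      have : dot2 w1 (-perp u0) = -dot2 w1 (perp u0) := by
        show w1.1 * (-perp u0).1 + w1.2 * (-perp u0).2 = _
        simp only [Prod.fst_neg, Prod.snd_neg, dot2]
        ring
      rw [this]
      linarith
    · have hperp : perp (-u0) = -perp u0 := by simp [perp, Prod.ext_iff]
      rw [hperp]
      have e1 : dot2 w1 (-perp u0) = -dot2 w1 (perp u0) := by
        show w1.1 * (-perp u0).1 + w1.2 * (-perp u0).2 = _
        simp only [Prod.fst_neg, Prod.snd_neg, dot2]; ring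
      have e2 : dot2 w2 (-perp u0) = -dot2 w2 (perp u0) := by
        show w2.1 * (-perp u0).1 + w2.2 * (-perp u0).2 = _
        simp only [Prod.fst_neg, Prod.snd_neg, dot2]; ring
      rw [e1, e2, hβ1, hβ2]
  · exact ⟨u0, hu0, hpos, by rw [hβ1, hβ2]⟩

end BHT

namespace BHT

lemma exists_harmonic (c : ℝ) : ∃ N : ℕ, c ≤ ∑ i ∈ Finset.range N, (1/((i:ℝ)+2)) := by
  obtain ⟨n, hn⟩ := (Real.tendsto_sum_range_one_div_nat_succ_atTop.eventually_ge_atTop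
    (c+1)).exists
  refine ⟨n, ?_⟩
  have hshift : ∑ i ∈ Finset.range (n+1), (1/((i:ℝ)+1)) =
      (∑ i ∈ Finset.range n, (1/(((i:ℝ)+1)+1))) + 1 := by
    rw [Finset.sum_range_succ']
    push_cast
    norm_num
  have hmono : ∑ i ∈ Finset.range n, (1/((i:ℝ)+1)) ≤
      ∑ i ∈ Finset.range (n+1), (1/((i:ℝ)+1)) := by
    rw [Finset.sum_range_succ]
    have : (0:ℝ) ≤ 1/((n:ℝ)+1) := by positivity
    linarith
  have heq : ∑ i ∈ Finset.range n, (1/((i:ℝ)+2)) =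
      ∑ i ∈ Finset.range n, (1/(((i:ℝ)+1)+1)) := by
    apply Finset.sum_congr rfl
    intro i _
    ring_nf
  have hn' : c + 1 ≤ ∑ i ∈ Finset.range n, (1/((i:ℝ)+1)) := hn
  linarith

lemma log_bound (i : ℕ) {qx : ℝ} (h1 : (i:ℝ)+1 < qx) (h2 : qx ≤ (i:ℝ)+2) :
    1/((i:ℝ)+2) ≤ Real.log (qx/(qx-1)) := by
  have hi : (0:ℝ) ≤ (i:ℝ) := Nat.cast_nonneg i
  have hq1 : 1 < qx := by linarith
  have hy : (0:ℝ) < ((i:ℝ)+2)/((i:ℝ)+1) := by positivity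
  have hcompare : ((i:ℝ)+2)/((i:ℝ)+1) ≤ qx/(qx-1) := by
    rw [div_le_div_iff₀ (by positivity) (by linarith)]
    nlinarith
  have hlog1 : Real.log (((i:ℝ)+2)/((i:ℝ)+1)) ≤ Real.log (qx/(qx-1)) :=
    Real.log_le_log hy hcompare
  have key : 1 - (((i:ℝ)+2)/((i:ℝ)+1))⁻¹ ≤ Real.log (((i:ℝ)+2)/((i:ℝ)+1)) := by
    have h := Real.add_one_le_exp (-Real.log (((i:ℝ)+2)/((i:ℝ)+1)))
    rw [Real.exp_neg, Real.exp_log hy] at h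
    linarith
  have heq : 1 - (((i:ℝ)+2)/((i:ℝ)+1))⁻¹ = 1/((i:ℝ)+2) := by
    rw [inv_div]
    have h2' : ((i:ℝ)+2) ≠ 0 := by positivity
    field_simp
    norm_num
  linarith

theorem part_two {w1 w2 : V2} (hli : LinearIndependent ℝ ![w1, w2]) (M : ℝ) :
    ∃ (c u : V2) (l1 l2 : ℝ), dot2 u u = 1 ∧ 0 < l1 ∧ 0 < l2 ∧
      ∀ g : V2 → ℝ,
        (∀ᵐ x : V2,
          SPV w1 w2 (Set.indicator (rectSet c u l1 l2) fun _ => (1 : ℝ))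
            (Set.indicator (rectSet c u l1 l2) fun _ => (1 : ℝ)) x (g x)) →
        ENNReal.ofReal M * volume (rectSet c u l1 l2) ≤
          (∫⁻ x : V2, ENNReal.ofReal (|g x|)) := by
  obtain ⟨u, hu, hβpos, hβeq⟩ := adapted_direction hli
  have hw1 : w1 ≠ 0 := by have := hli.ne_zero 0; simpa using this
  set β := dot2 w1 (perp u) with hβdef
  set a1 := dot2 w1 u with ha1
  set a2 := dot2 w2 u with ha2
  set Ca := |a1| + |a2| + 1 with hCa
  have hCapos : 0 < Ca := by positivity
  set Mp := max M 0 with hMp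
  have hMMp : M ≤ Mp := le_max_left M 0
  have hMp0 : 0 ≤ Mp := le_max_right M 0
  obtain ⟨N, hN⟩ := exists_harmonic (2*Mp + 1)
  set Q : ℝ := (N:ℝ) + 1 with hQ
  have hQpos : 0 < Q := by positivity
  set K0 := Ca * Q / β with hK0
  have hK0pos : 0 < K0 := div_pos (mul_pos hCapos hQpos) hβpos
  set T := 4*K0 + 1 with hT
  have hTpos : 0 < T := by linarith
  refine ⟨(0 : V2), u, T, 1, hu, hTpos, one_pos, ?_⟩
  intro g hg
  set E : ℕ → Set V2 := fun i =>
    {x : V2 | dot2 (x - 0) u ∈ Icc K0 (T - K0) ∧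
      dot2 (x - 0) (perp u) ∈ Ioc ((i:ℝ)+1) ((i:ℝ)+2)} with hE
  have hEmeas : ∀ i, MeasurableSet (E i) := by
    intro i
    have hrw : E i = ((fun x : V2 => dot2 (x - 0) u) ⁻¹' Icc K0 (T - K0)) ∩
        ((fun x : V2 => dot2 (x - 0) (perp u)) ⁻¹' Ioc ((i:ℝ)+1) ((i:ℝ)+2)) := rfl
    have hc1 : Continuous (fun x : V2 => dot2 (x - 0) u) :=
      (continuous_dot2 u).comp (continuous_id.sub continuous_const)
    have hc2 : Continuous (fun x : V2 => dot2 (x - 0) (perp u)) :=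
      (continuous_dot2 (perp u)).comp (continuous_id.sub continuous_const)
    rw [hrw]
    exact (hc1.measurable measurableSet_Icc).inter (hc2.measurable measurableSet_Ioc)
  have hstrip : ∀ i : ℕ, i < N → ∀ x ∈ E i,
      SPV w1 w2 (Set.indicator (rectSet 0 u T 1) fun _ => (1 : ℝ))
        (Set.indicator (rectSet 0 u T 1) fun _ => (1 : ℝ)) x
        (Real.log ((dot2 (x - 0) (perp u)) / (dot2 (x - 0) (perp u) - 1))) := by
    intro i hiN x hx
    obtain ⟨hp, hq⟩ := hx
    have hq1 : (i:ℝ) + 1 < dot2 (x - 0) (perp u) := hq.1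
    have hq2 : dot2 (x - 0) (perp u) ≤ (i:ℝ) + 2 := hq.2
    have hi0 : (0:ℝ) ≤ (i:ℝ) := Nat.cast_nonneg i
    have hiN' : (i:ℝ) + 1 ≤ (N:ℝ) := by exact_mod_cast Nat.succ_le_of_lt hiN
    have hq0 : 1 < dot2 (x - 0) (perp u) := by linarith
    have hqQ : dot2 (x - 0) (perp u) ≤ Q := by rw [hQ]; linarith
    set qx := dot2 (x - 0) (perp u) with hqx
    set px := dot2 (x - 0) u with hpx
    have hSx : Sset w1 w2 (rectSet 0 u T 1) x = Icc ((qx-1)/β) (qx/β) := by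
      ext t
      rw [mem_S_iff hu, hβeq, show dot2 w1 (perp u) = β from hβdef.symm]
      constructor
      · rintro ⟨⟨_, hcond⟩, _⟩
        constructor
        · rw [div_le_iff₀ hβpos]; linarith [hcond.2]
        · rw [le_div_iff₀ hβpos]; linarith [hcond.1]
      · intro ht
        have ht1 : (qx-1)/β ≤ t := ht.1
        have ht2 : t ≤ qx/β := ht.2
        have htβ1 : qx - 1 ≤ t*β := by rw [div_le_iff₀ hβpos] at ht1; linarith
        have htβ2 : t*β ≤ qx := by rw [le_div_iff₀ hβpos] at ht2; linarith
        have hA0 : (0:ℝ) ≤ (qx-1)/β := div_nonneg (by linarith) (le_of_lt hβpos)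
        have ht0 : 0 ≤ t := le_trans hA0 ht1
        have htQ : t ≤ Q/β := le_trans ht2 ((div_le_div_iff_of_pos_right hβpos).mpr hqQ)
        have hbound : ∀ a : ℝ, |a| ≤ Ca → px - t*a ∈ Icc 0 T := by
          intro a ha
          have habs : |t*a| ≤ K0 := by
            calc |t*a| = |t| * |a| := abs_mul t a
              _ = t * |a| := by rw [abs_of_nonneg ht0]
              _ ≤ (Q/β) * Ca := mul_le_mul htQ ha (abs_nonneg a)
                  (div_nonneg (le_of_lt hQpos) (le_of_lt hβpos))
              _ = K0 := by rw [hK0]; ring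
          have h1 : t*a ≤ K0 := le_trans (le_abs_self _) habs
          have h2 : -(t*a) ≤ K0 := le_trans (neg_le_abs _) habs
          have hp1 : K0 ≤ px := hp.1
          have hp2 : px ≤ T - K0 := hp.2
          rw [Set.mem_Icc]
          constructor <;> linarith
        have hca1 : |a1| ≤ Ca := by rw [hCa]; linarith [abs_nonneg a2]
        have hca2 : |a2| ≤ Ca := by rw [hCa]; linarith [abs_nonneg a1]
        refine ⟨⟨hbound a1 hca1, Set.mem_Icc.mpr ⟨by linarith, by linarith⟩⟩,
               hbound a2 hca2, Set.mem_Icc.mpr ⟨by linarith, by linarith⟩⟩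
    have hApos : 0 < (qx-1)/β := div_pos (by linarith) hβpos
    have hBpos : 0 < qx/β := div_pos (by linarith) hβpos
    have hABle : (qx-1)/β ≤ qx/β := (div_le_div_iff_of_pos_right hβpos).mpr (by linarith)
    have hSne : (Sset w1 w2 (rectSet 0 u T 1) x).Nonempty := by
      rw [hSx]; exact ⟨(qx-1)/β, left_mem_Icc.mpr hABle⟩
    have hInf : sInf (Sset w1 w2 (rectSet 0 u T 1) x) = (qx-1)/β := by
      rw [hSx, csInf_Icc hABle]
    have hSup : sSup (Sset w1 w2 (rectSet 0 u T 1) x) = qx/β := by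
      rw [hSx, csSup_Icc hABle]
    have hspv := spv_pointwise hu hw1 x hSne
      (by rw [hInf]; exact ne_of_gt hApos) (by rw [hSup]; exact ne_of_gt hBpos)
    rw [hInf, hSup, abs_of_pos hBpos, abs_of_pos hApos] at hspv
    have hval : (qx/β) / ((qx-1)/β) = qx/(qx-1) :=
      div_div_div_cancel_right₀ (ne_of_gt hβpos) _ _
    rw [hval] at hspv
    exact hspv
  have key : ∀ i ∈ Finset.range N,
      ENNReal.ofReal ((1/((i:ℝ)+2)) * (T - 2*K0)) ≤
        ∫⁻ x in E i, ENNReal.ofReal (|g x|) := by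
    intro i hi
    have hi' : i < N := Finset.mem_range.mp hi
    have hvol : volume (E i) = ENNReal.ofReal (T - 2*K0) := by
      have hrw : E i = {x : V2 | dot2 (x - 0) u ∈ Icc K0 (T - K0) ∧
          dot2 (x - 0) (perp u) ∈ Ioc ((i:ℝ)+1) ((i:ℝ)+2)} := rfl
      rw [hrw, volume_coord_box hu, Real.volume_Icc, Real.volume_Ioc]
      have e1 : T - K0 - K0 = T - 2*K0 := by ring
      have e2 : (i:ℝ)+2 - ((i:ℝ)+1) = 1 := by ring
      rw [e1, e2, ENNReal.ofReal_one, mul_one]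
    have hae : ∀ᵐ x ∂(volume.restrict (E i)),
        ENNReal.ofReal (1/((i:ℝ)+2)) ≤ ENNReal.ofReal (|g x|) := by
      rw [ae_restrict_iff' (hEmeas i)]
      filter_upwards [hg] with x hx hxE
      have hsp := hstrip i hi' x hxE
      have hgx : g x = Real.log ((dot2 (x - 0) (perp u)) / (dot2 (x - 0) (perp u) - 1)) :=
        tendsto_nhds_unique hx hsp
      apply ENNReal.ofReal_le_ofReal
      rw [hgx]
      exact le_trans (log_bound i hxE.2.1 hxE.2.2) (le_abs_self _)
    calc ENNReal.ofReal ((1/((i:ℝ)+2)) * (T - 2*K0))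
        = ENNReal.ofReal (1/((i:ℝ)+2)) * ENNReal.ofReal (T - 2*K0) :=
          ENNReal.ofReal_mul (by positivity)
      _ = ENNReal.ofReal (1/((i:ℝ)+2)) * volume (E i) := by rw [hvol]
      _ = ∫⁻ _ in E i, ENNReal.ofReal (1/((i:ℝ)+2)) := (setLIntegral_const _ _).symm
      _ ≤ ∫⁻ x in E i, ENNReal.ofReal (|g x|) := lintegral_mono_ae hae
  have hdisj : Set.PairwiseDisjoint ↑(Finset.range N) E := by
    intro i _ j _ hij
    show Disjoint (E i) (E j)
    rw [Set.disjoint_left]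
    intro x hxi hxj
    have h1 := hxi.2
    have h2 := hxj.2
    rcases lt_or_gt_of_ne hij with h | h
    · have hc : (i:ℝ) + 1 ≤ (j:ℝ) := by exact_mod_cast Nat.succ_le_of_lt h
      have := h1.2; have := h2.1; linarith [h1.2, h2.1]
    · have hc : (j:ℝ) + 1 ≤ (i:ℝ) := by exact_mod_cast Nat.succ_le_of_lt h
      linarith [h2.2, h1.1]
  rcases le_or_gt M 0 with hM0 | hM0
  · rw [ENNReal.ofReal_eq_zero.mpr hM0, zero_mul]
    exact zero_le
  · have hsum : M * T ≤ ∑ i ∈ Finset.range N, (1/((i:ℝ)+2)) * (T - 2*K0) := by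
      rw [← Finset.sum_mul]
      nlinarith [hN, hK0pos, mul_le_mul_of_nonneg_right hMMp (by linarith : (0:ℝ) ≤ 4*K0),
        mul_le_mul_of_nonneg_right hN (by linarith : (0:ℝ) ≤ 2*K0+1)]
    calc ENNReal.ofReal M * volume (rectSet 0 u T 1)
        = ENNReal.ofReal (M * T) := by
          rw [volume_rect hu, ENNReal.ofReal_one, mul_one, ← ENNReal.ofReal_mul (le_of_lt hM0)]
      _ ≤ ENNReal.ofReal (∑ i ∈ Finset.range N, (1/((i:ℝ)+2)) * (T - 2*K0)) :=
          ENNReal.ofReal_le_ofReal hsum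
      _ = ∑ i ∈ Finset.range N, ENNReal.ofReal ((1/((i:ℝ)+2)) * (T - 2*K0)) :=
          ENNReal.ofReal_sum_of_nonneg (fun i _ => by
            have : (0:ℝ) < T - 2*K0 := by rw [hT]; linarith
            positivity)
      _ ≤ ∑ i ∈ Finset.range N, ∫⁻ x in E i, ENNReal.ofReal (|g x|) :=
          Finset.sum_le_sum key
      _ = ∫⁻ x in ⋃ i ∈ Finset.range N, E i, ENNReal.ofReal (|g x|) :=
          (lintegral_biUnion_finset hdisj (fun i _ => hEmeas i) _).symm
      _ ≤ ∫⁻ x : V2, ENNReal.ofReal (|g x|) := setLIntegral_le_lintegral _ _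

end BHT

namespace BHT

lemma eLpNorm_prod {s : Set V2} (hs : MeasurableSet s) (h0 : volume s ≠ 0)
    (htop : volume s ≠ ∞) {p q : ℝ≥0∞} (hp : 1 ≤ p) (hq : 1 ≤ q) (hpq : p⁻¹ + q⁻¹ = 1) :
    eLpNorm (s.indicator fun _ => (1:ℝ)) p volume *
      eLpNorm (s.indicator fun _ => (1:ℝ)) q volume = volume s := by
  have hp0 : p ≠ 0 := by
    intro h; rw [h] at hp; exact (not_le.mpr zero_lt_one) hp
  have hq0 : q ≠ 0 := by
    intro h; rw [h] at hq; exact (not_le.mpr zero_lt_one) hq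
  have hnorm : ‖(1:ℝ)‖ₑ = 1 := by simp
  by_cases hptop : p = ∞
  · have hq1 : q = 1 := by
      rw [hptop] at hpq
      simp only [ENNReal.inv_top, zero_add] at hpq
      exact ENNReal.inv_eq_one.mp hpq
    rw [hptop, hq1, eLpNorm_exponent_top, eLpNormEssSup_indicator_const_eq s _ h0,
      eLpNorm_indicator_const hs one_ne_zero ENNReal.one_ne_top, hnorm]
    simp [ENNReal.toReal_one]
  by_cases hqtop : q = ∞
  · have hp1 : p = 1 := by
      rw [hqtop] at hpq
      simp only [ENNReal.inv_top, add_zero] at hpq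
      exact ENNReal.inv_eq_one.mp hpq
    rw [hqtop, hp1, eLpNorm_exponent_top, eLpNormEssSup_indicator_const_eq s _ h0,
      eLpNorm_indicator_const hs one_ne_zero ENNReal.one_ne_top, hnorm]
    simp [ENNReal.toReal_one]
  · rw [eLpNorm_indicator_const hs hp0 hptop, eLpNorm_indicator_const hs hq0 hqtop, hnorm]
    simp only [ENNReal.coe_one, one_mul]
    rw [← ENNReal.rpow_add _ _ h0 htop]
    have hexp : 1/p.toReal + 1/q.toReal = 1 := by
      have hfin : (p⁻¹ + q⁻¹).toReal = (1:ℝ≥0∞).toReal := by rw [hpq]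
      rw [ENNReal.toReal_add (ENNReal.inv_ne_top.mpr hp0) (ENNReal.inv_ne_top.mpr hq0),
        ENNReal.toReal_inv, ENNReal.toReal_inv, ENNReal.toReal_one] at hfin
      rw [one_div, one_div]
      exact hfin
    rw [hexp, ENNReal.rpow_one]

end BHT

/-- **Theorem (half-space operators on the border of the Banach triangle).**
For linearly independent `w₁, w₂`:
(i) for every rectangle `R` the principal value `S_{(w₁,w₂)}(χ_R,χ_R)(x)` exists for
a.e. `x`; (ii) the ratios `‖S_{(w₁,w₂)}(χ_R,χ_R)‖₁ / |R|` over rectangles `R` are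
unbounded; (iii) consequently for every `p ∈ [1,∞]` and conjugate `p'` there is no
constant `C` with `‖S(f,g)‖₁ ≤ C‖f‖_p‖g‖_{p'}` for all indicators of rectangles. -/
theorem halfspace_border_banach (w1 w2 : V2)
    (hli : LinearIndependent ℝ ![w1, w2]) :
    (∀ (c u : V2) (l1 l2 : ℝ), dot2 u u = 1 → 0 < l1 → 0 < l2 →
      ∃ g : V2 → ℝ, ∀ᵐ x : V2,
        SPV w1 w2 (Set.indicator (rectSet c u l1 l2) fun _ => (1 : ℝ))
          (Set.indicator (rectSet c u l1 l2) fun _ => (1 : ℝ)) x (g x)) ∧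
    (∀ M : ℝ, ∃ (c u : V2) (l1 l2 : ℝ), dot2 u u = 1 ∧ 0 < l1 ∧ 0 < l2 ∧
      ∀ g : V2 → ℝ,
        (∀ᵐ x : V2,
          SPV w1 w2 (Set.indicator (rectSet c u l1 l2) fun _ => (1 : ℝ))
            (Set.indicator (rectSet c u l1 l2) fun _ => (1 : ℝ)) x (g x)) →
        ENNReal.ofReal M * volume (rectSet c u l1 l2) ≤
          (∫⁻ x : V2, ENNReal.ofReal (|g x|))) ∧
    ∀ p q : ℝ≥0∞, 1 ≤ p → 1 ≤ q → p⁻¹ + q⁻¹ = 1 →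
      ¬ ∃ C : ℝ, ∀ (c1 u1 : V2) (l1 l1' : ℝ) (c2 u2 : V2) (l2 l2' : ℝ),
        dot2 u1 u1 = 1 → 0 < l1 → 0 < l1' → dot2 u2 u2 = 1 → 0 < l2 → 0 < l2' →
        ∀ g : V2 → ℝ,
          (∀ᵐ x : V2,
            SPV w1 w2 (Set.indicator (rectSet c1 u1 l1 l1') fun _ => (1 : ℝ))
              (Set.indicator (rectSet c2 u2 l2 l2') fun _ => (1 : ℝ)) x (g x)) →
          (∫⁻ x : V2, ENNReal.ofReal (|g x|)) ≤ ENNReal.ofReal C *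
            (eLpNorm (Set.indicator (rectSet c1 u1 l1 l1') fun _ => (1 : ℝ)) p volume *
              eLpNorm (Set.indicator (rectSet c2 u2 l2 l2') fun _ => (1 : ℝ)) q volume) := by
  have hw1 : w1 ≠ 0 := by have := hli.ne_zero 0; simpa using this
  refine ⟨?_, ?_, ?_⟩
  · intro c u l1 l2 hu _ _
    exact BHT.part_one hu hw1
  · intro M
    exact BHT.part_two hli M
  · intro p q hp hq hpq
    rintro ⟨C, hC⟩
    obtain ⟨c, u, l1, l2, hu, hl1, hl2, hbound⟩ := BHT.part_two hli (max C 0 + 1)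
    obtain ⟨g, hg⟩ := BHT.part_one (c := c) (l1 := l1) (l2 := l2) (w2 := w2) hu hw1
    have h1 := hbound g hg
    have h2 := hC c u l1 l2 c u l1 l2 hu hl1 hl2 hu hl1 hl2 g hg
    have hmeas : MeasurableSet (rectSet c u l1 l2) := (BHT.isClosed_rect hu).measurableSet
    have hvol : volume (rectSet c u l1 l2) = ENNReal.ofReal l1 * ENNReal.ofReal l2 :=
      BHT.volume_rect hu
    have hv0 : volume (rectSet c u l1 l2) ≠ 0 := by
      rw [hvol]
      exact mul_ne_zero (ENNReal.ofReal_pos.mpr hl1).ne' (ENNReal.ofReal_pos.mpr hl2).ne'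
    have hvtop : volume (rectSet c u l1 l2) ≠ ∞ := by
      rw [hvol]
      exact ENNReal.mul_ne_top ENNReal.ofReal_ne_top ENNReal.ofReal_ne_top
    rw [BHT.eLpNorm_prod hmeas hv0 hvtop hp hq hpq] at h2
    have h3 : ENNReal.ofReal C * volume (rectSet c u l1 l2) ≤
        ENNReal.ofReal (max C 0) * volume (rectSet c u l1 l2) :=
      mul_le_mul_left (ENNReal.ofReal_le_ofReal (le_max_left C 0)) _
    have h4 : ENNReal.ofReal (max C 0 + 1) * volume (rectSet c u l1 l2) ≤
        ENNReal.ofReal (max C 0) * volume (rectSet c u l1 l2) :=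
      le_trans h1 (le_trans h2 h3)
    have h5 : ENNReal.ofReal (max C 0 + 1) ≤ ENNReal.ofReal (max C 0) :=
      (ENNReal.mul_le_mul_iff_left hv0 hvtop).mp h4
    have h6 : ENNReal.ofReal (max C 0) < ENNReal.ofReal (max C 0 + 1) := by
      rw [ENNReal.ofReal_lt_ofReal_iff (by linarith [le_max_right C 0])]
      linarith
    exact absurd h5 (not_le.mpr h6)
end
end

section
/- Sliding lower bound for the principal-value form on rectangle configurations: Let w ∈ ℝ² be a unit vector, u ∈ ℝ², and a ∈ (0,1]. Let R ⊆ ℝ² be a closed rectangle with side lengths 1 and a whose side of length 1 is parallel to w, let R′ = R − 2w, and let Q ⊆ ℝ² be a measurable set containing {x − t u : x ∈ R, 1 ≤ t ≤ 3}. Then the principal-value limit Λ := lim_{δ→0⁺} ∫_{δ<|t|<1/δ} (∫_{ℝ²} χ_R(x) χ_{R′}(x − t w) χ_Q(x − t u) dx) dt/t exists and Λ ≥ a/3 = |R|/3. -/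
open MeasureTheory Filter Topology Set

noncomputable section

def rotL (w : V2) : V2 →ₗ[ℝ] V2 where
  toFun y := (y.1 * w.1 - y.2 * w.2, y.1 * w.2 + y.2 * w.1)
  map_add' x y := by simp [Prod.ext_iff]; constructor <;> ring
  map_smul' r y := by simp [Prod.ext_iff]; constructor <;> ring

lemma rotL_apply (w y : V2) : rotL w y = (y.1 * w.1 - y.2 * w.2, y.1 * w.2 + y.2 * w.1) := rfl

lemma rotL_det (w : V2) : LinearMap.det (rotL w) = w.1 * w.1 + w.2 * w.2 := by
  rw [← LinearMap.det_toMatrix (Module.Basis.finTwoProd ℝ), Matrix.det_fin_two]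
  simp [LinearMap.toMatrix_apply, rotL_apply, Module.Basis.finTwoProd_zero, Module.Basis.finTwoProd_one]

def rotEquiv (w : V2) (hw : w.1 * w.1 + w.2 * w.2 = 1) : V2 ≃ₗ[ℝ] V2 :=
  LinearEquiv.ofLinear (rotL w) (rotL (w.1, -w.2))
    (LinearMap.ext fun y => by
      simp [LinearMap.comp_apply, rotL_apply, Prod.ext_iff]
      exact ⟨by linear_combination y.1 * hw, by linear_combination y.2 * hw⟩)
    (LinearMap.ext fun y => by
      simp [LinearMap.comp_apply, rotL_apply, Prod.ext_iff]
      exact ⟨by linear_combination y.1 * hw, by linear_combination y.2 * hw⟩)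

lemma rot_measurePreserving (w : V2) (hw : w.1 * w.1 + w.2 * w.2 = 1) :
    MeasurePreserving (rotL w) (volume : Measure V2) volume := by
  refine ⟨(LinearMap.continuous_of_finiteDimensional _).measurable, ?_⟩
  rw [Measure.map_linearMap_addHaar_eq_smul_addHaar _ (by rw [rotL_det, hw]; norm_num)]
  simp [rotL_det, hw]

lemma rectSet_eq (c w : V2) (l1 l2 : ℝ) :
    rectSet c w l1 l2 = (fun y => c + rotL w y) '' (Icc 0 l1 ×ˢ Icc 0 l2) := by
  ext x
  constructor
  · rintro ⟨s, t, hs, ht, rfl⟩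
    exact ⟨(s, t), ⟨hs, ht⟩, by simp [rotL_apply, perp, Prod.ext_iff]; constructor <;> ring⟩
  · rintro ⟨y, ⟨hy1, hy2⟩, rfl⟩
    exact ⟨y.1, y.2, hy1, hy2, by simp [rotL_apply, perp, Prod.ext_iff]; constructor <;> ring⟩

/-- **Sliding lower bound for the principal-value form on rectangle
configurations.**  With `R` a `1 × a` rectangle with long side parallel to the unit
vector `w`, `R′ = R − 2w` its reach, and `Q ⊇ {x − tu : x ∈ R, 1 ≤ t ≤ 3}`, the
principal-value limit `Λ` of `δ ↦ ∫_{δ<|t|<1/δ} ∫ χ_R(x) χ_{R′}(x−tw) χ_Q(x−tu) dx dt/t`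
exists and `Λ ≥ a/3 = |R|/3`. -/
theorem sliding_lower_bound (w u : V2) (hw : dot2 w w = 1)
    (a : ℝ) (ha0 : 0 < a) (ha1 : a ≤ 1) (c : V2) (Q : Set V2)
    (hQmeas : MeasurableSet Q)
    (hQ : {y : V2 | ∃ x ∈ rectSet c w 1 a, ∃ t : ℝ, 1 ≤ t ∧ t ≤ 3 ∧ y = x - t • u} ⊆ Q) :
    ∃ L : ℝ,
      Filter.Tendsto
        (fun δ : ℝ => ∫ t in {t : ℝ | δ < |t| ∧ |t| < δ⁻¹},
          (∫ x : V2,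
            Set.indicator (rectSet c w 1 a) (fun _ => (1 : ℝ)) x *
              (Set.indicator ((fun y => y - (2 : ℝ) • w) '' rectSet c w 1 a)
                  (fun _ => (1 : ℝ)) (x - t • w) *
                Set.indicator Q (fun _ => (1 : ℝ)) (x - t • u))) / t)
        (𝓝[>] (0 : ℝ)) (𝓝 L) ∧
      a / 3 ≤ L := by
  have hw' : w.1 * w.1 + w.2 * w.2 = 1 := hw
  set T : V2 → V2 := fun y => c + rotL w y with hT
  set B : Set V2 := Icc (0:ℝ) 1 ×ˢ Icc (0:ℝ) a with hB
  -- measure preservation and embedding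
  have hTMP : MeasurePreserving T volume volume :=
    MeasurePreserving.add_left volume c (rot_measurePreserving w hw')
  have hTemb : MeasurableEmbedding T := by
    have h1 : MeasurableEmbedding
        (⇑(rotEquiv w hw').toContinuousLinearEquiv.toHomeomorph) :=
      (rotEquiv w hw').toContinuousLinearEquiv.toHomeomorph.measurableEmbedding
    have h2 : MeasurableEmbedding (fun x : V2 => c + x) :=
      (MeasurableEquiv.addLeft c).measurableEmbedding
    exact h2.comp h1
  have hinj : Function.Injective T := hTemb.injective
  have hmem : ∀ y : V2, T y ∈ rectSet c w 1 a ↔ y ∈ Icc (0:ℝ) 1 ×ˢ Icc (0:ℝ) a := by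
    intro y
    rw [rectSet_eq]
    exact hinj.mem_set_image
  -- rewrite the inner integral
  have hcomp : ∀ t : ℝ,
      (∫ x : V2,
        Set.indicator (rectSet c w 1 a) (fun _ => (1 : ℝ)) x *
          (Set.indicator ((fun y => y - (2 : ℝ) • w) '' rectSet c w 1 a)
              (fun _ => (1 : ℝ)) (x - t • w) *
            Set.indicator Q (fun _ => (1 : ℝ)) (x - t • u)))
      = ∫ y : V2,
          Set.indicator B (fun _ => (1 : ℝ)) y *
            (Set.indicator (Icc (t-2) (t-1) ×ˢ Icc (0:ℝ) a) (fun _ => (1 : ℝ)) y *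
              Set.indicator Q (fun _ => (1 : ℝ)) (T y - t • u)) := by
    intro t
    rw [← hTMP.integral_comp hTemb]
    refine integral_congr_ae (Filter.Eventually.of_forall fun y => ?_)
    have e1 : Set.indicator (rectSet c w 1 a) (fun _ => (1 : ℝ)) (T y)
        = Set.indicator B (fun _ => (1 : ℝ)) y := by
      by_cases h : y ∈ B
      · rw [Set.indicator_of_mem ((hmem y).mpr h), Set.indicator_of_mem h]
      · rw [Set.indicator_of_notMem (fun hc => h ((hmem y).mp hc)),
          Set.indicator_of_notMem h]
    have hTsh : T y - t • w + (2:ℝ) • w = T (y.1 - (t - 2), y.2) := by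
      simp [hT, rotL_apply, Prod.ext_iff]
      constructor <;> ring
    have h2iff : (T y - t • w ∈ (fun z => z - (2:ℝ) • w) '' rectSet c w 1 a) ↔
        y ∈ Icc (t-2) (t-1) ×ˢ Icc (0:ℝ) a := by
      constructor
      · rintro ⟨z, hz, hzeq⟩
        have hz' : z = T (y.1 - (t - 2), y.2) := by
          rw [← hTsh, ← hzeq]; simp
        rw [hz'] at hz
        have hmm := (hmem _).mp hz
        have h1 : y.1 - (t - 2) ∈ Icc (0:ℝ) 1 := hmm.1
        have h2 : y.2 ∈ Icc (0:ℝ) a := hmm.2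
        simp only [Set.mem_Icc] at h1
        exact ⟨Set.mem_Icc.mpr ⟨by linarith [h1.1], by linarith [h1.2]⟩, h2⟩
      · intro hy
        refine ⟨T (y.1 - (t - 2), y.2), (hmem _).mpr ?_, by
          rw [← hTsh]; simp⟩
        have h1 := Set.mem_Icc.mp hy.1
        have h1' : y.1 - (t - 2) ∈ Icc (0:ℝ) 1 :=
          Set.mem_Icc.mpr ⟨by linarith [h1.1], by linarith [h1.2]⟩
        exact ⟨h1', hy.2⟩
    have e2 : Set.indicator ((fun z => z - (2:ℝ) • w) '' rectSet c w 1 a)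
        (fun _ => (1 : ℝ)) (T y - t • w)
        = Set.indicator (Icc (t-2) (t-1) ×ˢ Icc (0:ℝ) a) (fun _ => (1 : ℝ)) y := by
      by_cases h : y ∈ Icc (t-2) (t-1) ×ˢ Icc (0:ℝ) a
      · rw [Set.indicator_of_mem (h2iff.mpr h), Set.indicator_of_mem h]
      · rw [Set.indicator_of_notMem (fun hc => h (h2iff.mp hc)),
          Set.indicator_of_notMem h]
    simp only [e1, e2]
  -- value of the inner integral
  have hzero : ∀ t : ℝ, t ∉ Icc (1:ℝ) 3 →
      (∫ y : V2,
          Set.indicator B (fun _ => (1 : ℝ)) y *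
            (Set.indicator (Icc (t-2) (t-1) ×ˢ Icc (0:ℝ) a) (fun _ => (1 : ℝ)) y *
              Set.indicator Q (fun _ => (1 : ℝ)) (T y - t • u))) = 0 := by
    intro t ht
    rw [show (fun y : V2 =>
          Set.indicator B (fun _ => (1 : ℝ)) y *
            (Set.indicator (Icc (t-2) (t-1) ×ˢ Icc (0:ℝ) a) (fun _ => (1 : ℝ)) y *
              Set.indicator Q (fun _ => (1 : ℝ)) (T y - t • u))) = (fun _ => (0:ℝ))
        from funext fun y => ?_, integral_zero]
    by_cases hy : y ∈ B
    · by_cases hy2 : y ∈ Icc (t-2) (t-1) ×ˢ Icc (0:ℝ) a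
      · exfalso
        have hy1 : y.1 ∈ Icc (0:ℝ) 1 := hy.1
        have hy21 : y.1 ∈ Icc (t-2) (t-1) := hy2.1
        have h1 := Set.mem_Icc.mp hy1
        have h2 := Set.mem_Icc.mp hy21
        simp only [Set.mem_Icc, not_and, not_le] at ht
        have h3 : (1:ℝ) ≤ t := by linarith [h1.1, h2.2]
        linarith [ht h3, h1.2, h2.1]
      · rw [Set.indicator_of_notMem hy2]; ring
    · rw [Set.indicator_of_notMem hy]; ring
  have hval : ∀ t ∈ Icc (1:ℝ) 3,
      (∫ y : V2,
          Set.indicator B (fun _ => (1 : ℝ)) y *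
            (Set.indicator (Icc (t-2) (t-1) ×ˢ Icc (0:ℝ) a) (fun _ => (1 : ℝ)) y *
              Set.indicator Q (fun _ => (1 : ℝ)) (T y - t • u)))
        = ((1 ⊓ (t-1)) - (0 ⊔ (t-2))) * a := by
    intro t ht
    have hpt : ∀ y : V2,
        Set.indicator B (fun _ => (1 : ℝ)) y *
            (Set.indicator (Icc (t-2) (t-1) ×ˢ Icc (0:ℝ) a) (fun _ => (1 : ℝ)) y *
              Set.indicator Q (fun _ => (1 : ℝ)) (T y - t • u))
          = Set.indicator ((Icc (0:ℝ) 1 ∩ Icc (t-2) (t-1)) ×ˢ Icc (0:ℝ) a)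
              (fun _ => (1 : ℝ)) y := by
      intro y
      by_cases hy : y ∈ B
      · have hyB := Set.mem_prod.mp hy
        have hQ1 : T y - t • u ∈ Q := hQ ⟨T y, (hmem y).mpr hy, t, ht.1, ht.2, rfl⟩
        by_cases hy2 : y ∈ Icc (t-2) (t-1) ×ˢ Icc (0:ℝ) a
        · have hy2' := Set.mem_prod.mp hy2
          have hmemI : y ∈ (Icc (0:ℝ) 1 ∩ Icc (t-2) (t-1)) ×ˢ Icc (0:ℝ) a :=
            Set.mem_prod.mpr ⟨Set.mem_inter hyB.1 hy2'.1, hyB.2⟩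
          rw [Set.indicator_of_mem hy, Set.indicator_of_mem hy2,
            Set.indicator_of_mem hQ1, Set.indicator_of_mem hmemI]
          norm_num
        · have hnot : y ∉ (Icc (0:ℝ) 1 ∩ Icc (t-2) (t-1)) ×ˢ Icc (0:ℝ) a :=
            fun hc => hy2 (Set.mem_prod.mpr
              ⟨Set.mem_of_mem_inter_right (Set.mem_prod.mp hc).1, (Set.mem_prod.mp hc).2⟩)
          rw [Set.indicator_of_notMem hy2, Set.indicator_of_notMem hnot]
          ring
      · have hnot : y ∉ (Icc (0:ℝ) 1 ∩ Icc (t-2) (t-1)) ×ˢ Icc (0:ℝ) a :=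
          fun hc => hy (Set.mem_prod.mpr
            ⟨Set.mem_of_mem_inter_left (Set.mem_prod.mp hc).1, (Set.mem_prod.mp hc).2⟩)
        rw [Set.indicator_of_notMem hy, Set.indicator_of_notMem hnot]
        ring
    simp only [hpt]
    rw [integral_indicator_const (1:ℝ)
      ((measurableSet_Icc.inter measurableSet_Icc).prod measurableSet_Icc)]
    have hnn : (0:ℝ) ≤ (1 ⊓ (t-1)) - (0 ⊔ (t-2)) := by
      have h1 := ht.1; have h2 := ht.2
      rcases le_total t 2 with h | h
      · rw [min_eq_right (by linarith), max_eq_left (by linarith)]; linarith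
      · rw [min_eq_left (by linarith), max_eq_right (by linarith)]; linarith
    rw [Set.Icc_inter_Icc, Measure.volume_eq_prod, measureReal_def, Measure.prod_prod,
      Real.volume_Icc, Real.volume_Icc, ENNReal.toReal_mul,
      ENNReal.toReal_ofReal hnn, sub_zero, ENNReal.toReal_ofReal ha0.le,
      smul_eq_mul, mul_one]
  -- the outer integrand as an explicit function of t
  have hfun : ∀ t : ℝ,
      (∫ x : V2,
        Set.indicator (rectSet c w 1 a) (fun _ => (1 : ℝ)) x *
          (Set.indicator ((fun y => y - (2 : ℝ) • w) '' rectSet c w 1 a)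
              (fun _ => (1 : ℝ)) (x - t • w) *
            Set.indicator Q (fun _ => (1 : ℝ)) (x - t • u))) / t
      = Set.indicator (Icc (1:ℝ) 3)
          (fun s => (((1 ⊓ (s-1)) - (0 ⊔ (s-2))) * a) / s) t := by
    intro t
    rw [hcomp t]
    by_cases ht : t ∈ Icc (1:ℝ) 3
    · rw [hval t ht, Set.indicator_of_mem ht]
    · rw [hzero t ht, Set.indicator_of_notMem ht, zero_div]
  set L : ℝ := ∫ t in Icc (1:ℝ) 3, (((1 ⊓ (t-1)) - (0 ⊔ (t-2))) * a) / t with hL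
  have houter : ∀ δ ∈ Ioo (0:ℝ) 3⁻¹,
      (∫ t in {t : ℝ | δ < |t| ∧ |t| < δ⁻¹},
          (∫ x : V2,
            Set.indicator (rectSet c w 1 a) (fun _ => (1 : ℝ)) x *
              (Set.indicator ((fun y => y - (2 : ℝ) • w) '' rectSet c w 1 a)
                  (fun _ => (1 : ℝ)) (x - t • w) *
                Set.indicator Q (fun _ => (1 : ℝ)) (x - t • u))) / t) = L := by
    intro δ hδ
    have hsub : Icc (1:ℝ) 3 ⊆ {t : ℝ | δ < |t| ∧ |t| < δ⁻¹} := by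
      intro t ht
      have ht1 := ht.1
      have ht2 := ht.2
      have h3 : (3:ℝ) < δ⁻¹ := by
        have h1 : ((3:ℝ)⁻¹)⁻¹ = 3 := by norm_num
        calc (3:ℝ) = ((3:ℝ)⁻¹)⁻¹ := h1.symm
          _ < δ⁻¹ := by
            apply inv_strictAnti₀ hδ.1 hδ.2
      constructor
      · rw [abs_of_nonneg (by linarith : (0:ℝ) ≤ t)]
        have : δ < 3⁻¹ := hδ.2
        have : (3:ℝ)⁻¹ < 1 := by norm_num
        linarith
      · rw [abs_of_nonneg (by linarith : (0:ℝ) ≤ t)]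
        linarith
    simp only [hfun]
    rw [setIntegral_indicator measurableSet_Icc, Set.inter_eq_right.mpr hsub]
  -- the tent integral
  have htent : ∫ t in Icc (1:ℝ) 3, ((1 ⊓ (t-1)) - (0 ⊔ (t-2))) = 1 := by
    have hc : Continuous fun t : ℝ => ((1 ⊓ (t-1)) - (0 ⊔ (t-2))) :=
      ((continuous_const.min (continuous_id.sub continuous_const)).sub
        (continuous_const.max (continuous_id.sub continuous_const)))
    rw [MeasureTheory.integral_Icc_eq_integral_Ioc,
      ← intervalIntegral.integral_of_le (by norm_num : (1:ℝ) ≤ 3),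
      ← intervalIntegral.integral_add_adjacent_intervals
        (hc.intervalIntegrable 1 2) (hc.intervalIntegrable 2 3)]
    have h1 : ∫ t in (1:ℝ)..2, ((1 ⊓ (t-1)) - (0 ⊔ (t-2))) = ∫ t in (1:ℝ)..2, (t - 1) := by
      apply intervalIntegral.integral_congr
      intro t ht
      rw [Set.uIcc_of_le (by norm_num : (1:ℝ) ≤ 2), Set.mem_Icc] at ht
      simp only [min_eq_right (by linarith : t - 1 ≤ 1), max_eq_left (by linarith : t - 2 ≤ 0)]
      ring
    have h2 : ∫ t in (2:ℝ)..3, ((1 ⊓ (t-1)) - (0 ⊔ (t-2))) = ∫ t in (2:ℝ)..3, (3 - t) := by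
      apply intervalIntegral.integral_congr
      intro t ht
      rw [Set.uIcc_of_le (by norm_num : (2:ℝ) ≤ 3), Set.mem_Icc] at ht
      simp only [min_eq_left (by linarith : (1:ℝ) ≤ t - 1), max_eq_right (by linarith : (0:ℝ) ≤ t - 2)]
      ring
    rw [h1, h2,
      intervalIntegral.integral_sub intervalIntegral.intervalIntegrable_id intervalIntegrable_const,
      intervalIntegral.integral_sub intervalIntegrable_const intervalIntegral.intervalIntegrable_id]
    simp [integral_id]
    norm_num
  -- integrability of the two comparison functions on Icc 1 3
  have hconttent : Continuous fun t : ℝ => (((1 ⊓ (t-1)) - (0 ⊔ (t-2))) * a) :=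
    ((continuous_const.min (continuous_id.sub continuous_const)).sub
        (continuous_const.max (continuous_id.sub continuous_const))).mul continuous_const
  have hint1 : IntegrableOn (fun t : ℝ => (((1 ⊓ (t-1)) - (0 ⊔ (t-2))) * a) / 3)
      (Icc (1:ℝ) 3) volume :=
    ((hconttent.div_const 3).continuousOn).integrableOn_compact isCompact_Icc
  have hint2 : IntegrableOn (fun t : ℝ => (((1 ⊓ (t-1)) - (0 ⊔ (t-2))) * a) / t)
      (Icc (1:ℝ) 3) volume := by
    apply ContinuousOn.integrableOn_compact isCompact_Icc
    apply hconttent.continuousOn.div continuousOn_id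
    intro t ht
    have := (Set.mem_Icc.mp ht).1
    intro h
    rw [id] at h
    linarith
  have hLlb : a / 3 ≤ L := by
    have step1 : ∫ t in Icc (1:ℝ) 3, (((1 ⊓ (t-1)) - (0 ⊔ (t-2))) * a) / 3 ≤ L := by
      rw [hL]
      apply setIntegral_mono_on hint1 hint2 measurableSet_Icc
      intro t ht
      rw [Set.mem_Icc] at ht
      have hnn : (0:ℝ) ≤ ((1 ⊓ (t-1)) - (0 ⊔ (t-2))) * a := by
        apply mul_nonneg _ ha0.le
        have hle : (0:ℝ) ⊔ (t-2) ≤ 1 ⊓ (t-1) :=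
          le_min (max_le (by norm_num) (by linarith)) (max_le (by linarith) (by linarith))
        linarith
      apply div_le_div_of_nonneg_left hnn (by linarith) ht.2
    have step2 : ∫ t in Icc (1:ℝ) 3, (((1 ⊓ (t-1)) - (0 ⊔ (t-2))) * a) / 3 = a / 3 := by
      have : ∀ t : ℝ, (((1 ⊓ (t-1)) - (0 ⊔ (t-2))) * a) / 3
          = ((1 ⊓ (t-1)) - (0 ⊔ (t-2))) * (a / 3) := fun t => by ring
      simp only [this]
      rw [integral_mul_const, htent, one_mul]
    linarith [step1, step2.symm.le]
  refine ⟨L, ?_, hLlb⟩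
  apply Filter.Tendsto.congr' _ (tendsto_const_nhds : Tendsto (fun _ : ℝ => L) _ (𝓝 L))
  filter_upwards [Ioo_mem_nhdsGT (by norm_num : (0:ℝ) < 3⁻¹)]
    with δ hδ
  exact (houter δ hδ).symm
end
end
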